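/- For r ≥ 3, every proper edge-colouring of the complete r-partite graph K_r(t) with parts of size t = r³ contains a rainbow copy of K_r, i.e., r vertices, one in each part, such that all C(r,2) edges among them have pairwise distinct colours. -/

import Mathlib

/-- Every proper edge-colouring of the complete `r`-partite graph `K_r(r³)` contains a
rainbow `K_r` with one vertex in each part. -/
theorem stmt_17 (r : ℕ) (hr : 3 ≤ r)
    (c : (Fin r × Fin (r ^ 3)) → (Fin r × Fin (r ^ 3)) → ℕ)
    (hsym : ∀ u v, c u v = c v u)
    (hproper : ∀ u v w : Fin r × Fin (r ^ 3),
      u.1 ≠ v.1 → u.1 ≠ w.1 → v ≠ w → c u v ≠ c u w) :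
    ∃ f : Fin r → Fin r × Fin (r ^ 3), (∀ i, (f i).1 = i) ∧
      ∀ i j k l : Fin r, i ≠ j → k ≠ l → ({i, j} : Finset (Fin r)) ≠ {k, l} →
        c (f i) (f j) ≠ c (f k) (f l) := by
  classical
  have hr0 : 0 < r := by omega
  have ht0 : 0 < r ^ 3 := Nat.pow_pos hr0
  suffices H : ∀ m, m ≤ r → ∃ f : Fin r → Fin r × Fin (r ^ 3), (∀ i, (f i).1 = i) ∧
      ∀ i j k l : Fin r, i.val < m → j.val < m → k.val < m → l.val < m →
        i ≠ j → k ≠ l → ({i, j} : Finset (Fin r)) ≠ {k, l} →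
        c (f i) (f j) ≠ c (f k) (f l) by
    obtain ⟨f, h1, h2⟩ := H r le_rfl
    exact ⟨f, h1, fun i j k l => h2 i j k l i.isLt j.isLt k.isLt l.isLt⟩
  intro m
  induction m with
  | zero =>
    intro _
    exact ⟨fun i => (i, ⟨0, ht0⟩), fun i => rfl,
      fun i j k l hi => absurd hi (Nat.not_lt_zero _)⟩
  | succ m ih =>
    intro hm1
    have hm : m < r := hm1
    obtain ⟨f, hf1, hf2⟩ := ih (Nat.le_of_lt hm)
    set M : Fin r := ⟨m, hm⟩ with hM
    set P : Fin (r ^ 3) → Prop := fun x => ∃ p : Fin r × Fin r × Fin r,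
      p.1.val < m ∧ p.2.1.val < m ∧ p.2.2.val < m ∧ p.2.1 ≠ p.2.2 ∧
        c (M, x) (f p.1) = c (f p.2.1) (f p.2.2) with hP
    set B : Finset (Fin (r ^ 3)) := Finset.univ.filter P with hBdef
    -- two distinct candidate vertices in part M get different colours to a fixed earlier vertex
    have key : ∀ (j : Fin r), j.val < m → ∀ x x' : Fin (r ^ 3), x ≠ x' →
        c (M, x) (f j) ≠ c (M, x') (f j) := by
      intro j hj x x' hxx
      rw [hsym (M, x) (f j), hsym (M, x') (f j)]
      apply hproper
      · rw [hf1 j]; exact Fin.ne_of_val_ne (by simp [hM]; omega)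
      · rw [hf1 j]; exact Fin.ne_of_val_ne (by simp [hM]; omega)
      · exact fun h => hxx (congrArg Prod.snd h)
    have hmem : ∀ x ∈ B, P x := fun x hx => (Finset.mem_filter.mp hx).2
    have hcard : B.card ≤ m ^ 3 := by
      set w : Fin (r ^ 3) → ℕ × ℕ × ℕ := fun x =>
        if h : P x then (h.choose.1.val, h.choose.2.1.val, h.choose.2.2.val)
        else (0, 0, 0) with hw
      have hmaps : ∀ x ∈ B, w x ∈ Finset.range m ×ˢ Finset.range m ×ˢ Finset.range m := by
        intro x hx
        have h := hmem x hx
        obtain ⟨h1, h2, h3, _, _⟩ := h.choose_spec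
        simp only [hw, dif_pos h, Finset.mem_product, Finset.mem_range]
        exact ⟨h1, h2, h3⟩
      have hinj : Set.InjOn w B := by
        intro x hx x' hx' hww
        by_contra hxx
        have h := hmem x hx
        have h' := hmem x' hx'
        obtain ⟨h1, h2, h3, h4, h5⟩ := h.choose_spec
        obtain ⟨h1', h2', h3', h4', h5'⟩ := h'.choose_spec
        simp only [hw, dif_pos h, dif_pos h', Prod.mk.injEq] at hww
        obtain ⟨e1, e2, e3⟩ := hww
        have q1 : h.choose.1 = h'.choose.1 := Fin.ext e1
        have q2 : h.choose.2.1 = h'.choose.2.1 := Fin.ext e2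
        have q3 : h.choose.2.2 = h'.choose.2.2 := Fin.ext e3
        have : c (M, x) (f h.choose.1) = c (M, x') (f h.choose.1) := by
          rw [h5, q1, q2, q3, h5']
        exact key h.choose.1 h1 x x' hxx this
      calc B.card ≤ (Finset.range m ×ˢ Finset.range m ×ˢ Finset.range m).card :=
            Finset.card_le_card_of_injOn w hmaps hinj
        _ = m ^ 3 := by simp [Finset.card_product]; ring
    have hlt : B.card < r ^ 3 :=
      lt_of_le_of_lt hcard (Nat.pow_lt_pow_left hm (by norm_num))
    have hex : ∃ x : Fin (r ^ 3), x ∉ B := by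
      by_contra hall
      push_neg at hall
      have hle : (Finset.univ : Finset (Fin (r ^ 3))).card ≤ B.card :=
        Finset.card_le_card (fun x _ => hall x)
      rw [Finset.card_univ, Fintype.card_fin] at hle
      omega
    obtain ⟨x, hxB⟩ := hex
    have hB : ∀ j k l : Fin r, j.val < m → k.val < m → l.val < m → k ≠ l →
        c (M, x) (f j) ≠ c (f k) (f l) := by
      intro j k l hj hk hl hkl heq
      exact hxB (Finset.mem_filter.mpr ⟨Finset.mem_univ _,
        ⟨(j, k, l), hj, hk, hl, hkl, heq⟩⟩)
    have hNew : ∀ j l : Fin r, j.val < m → l.val < m → j ≠ l →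
        c (M, x) (f j) ≠ c (M, x) (f l) := by
      intro j l hj hl hjl
      apply hproper (M, x) (f j) (f l)
      · rw [hf1 j]; exact (Fin.ne_of_val_ne (by simp [hM]; omega)).symm
      · rw [hf1 l]; exact (Fin.ne_of_val_ne (by simp [hM]; omega)).symm
      · intro h
        apply hjl
        have := congrArg Prod.fst h
        rwa [hf1, hf1] at this
    set F : Fin r → Fin r × Fin (r ^ 3) := Function.update f M (M, x) with hF
    have hFm : F M = (M, x) := Function.update_self M (M, x) f
    have hFo : ∀ i : Fin r, i ≠ M → F i = f i :=
      fun i hi => Function.update_of_ne hi (M, x) f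
    have hF1 : ∀ i, (F i).1 = i := by
      intro i
      by_cases hi : i = M
      · subst hi; rw [hFm]
      · rw [hFo i hi]; exact hf1 i
    have small : ∀ i : Fin r, i.val < m + 1 → i ≠ M → i.val < m := by
      intro i h1 h2
      have : i.val ≠ m := fun hv => h2 (Fin.ext hv)
      omega
    refine ⟨F, hF1, ?_⟩
    intro i j k l hi hj hk hl hij hkl hne
    by_cases hiM : i = M <;> by_cases hjM : j = M <;>
      by_cases hkM : k = M <;> by_cases hlM : l = M
    all_goals first
      | (exact absurd (hiM.trans hjM.symm) hij)
      | (exact absurd (hkM.trans hlM.symm) hkl)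
      | skip
    -- i = M, k = M
    · subst hiM; subst hkM
      rw [hFm, hFo j hjM, hFo l hlM]
      have hjl : j ≠ l := fun h => hne (by rw [h])
      exact hNew j l (small j hj hjM) (small l hl hlM) hjl
    -- i = M, l = M
    · subst hiM; subst hlM
      rw [hFm, hFo j hjM, hFo k hkM, hsym (f k) (M, x)]
      have hjk : j ≠ k := fun h => hne (by rw [h]; exact Finset.pair_comm M k)
      exact hNew j k (small j hj hjM) (small k hk hkM) hjk
    -- i = M only
    · subst hiM
      rw [hFm, hFo j hjM, hFo k hkM, hFo l hlM]
      exact hB j k l (small j hj hjM) (small k hk hkM) (small l hl hlM) hkl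
    -- j = M, k = M
    · subst hjM; subst hkM
      rw [hFm, hFo i hiM, hFo l hlM, hsym (f i) (M, x)]
      have hil : i ≠ l := fun h => hne (by rw [h]; exact Finset.pair_comm l M)
      exact hNew i l (small i hi hiM) (small l hl hlM) hil
    -- j = M, l = M
    · subst hjM; subst hlM
      rw [hFm, hFo i hiM, hFo k hkM, hsym (f i) (M, x), hsym (f k) (M, x)]
      have hik : i ≠ k := fun h => hne (by rw [h])
      exact hNew i k (small i hi hiM) (small k hk hkM) hik
    -- j = M only
    · subst hjM
      rw [hFm, hFo i hiM, hFo k hkM, hFo l hlM, hsym (f i) (M, x)]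
      exact hB i k l (small i hi hiM) (small k hk hkM) (small l hl hlM) hkl
    -- k = M only
    · subst hkM
      rw [hFm, hFo i hiM, hFo j hjM, hFo l hlM]
      exact (hB l i j (small l hl hlM) (small i hi hiM) (small j hj hjM) hij).symm
    -- l = M only
    · subst hlM
      rw [hFm, hFo i hiM, hFo j hjM, hFo k hkM, hsym (f k) (M, x)]
      exact (hB k i j (small k hk hkM) (small i hi hiM) (small j hj hjM) hij).symm
    -- none
    · rw [hFo i hiM, hFo j hjM, hFo k hkM, hFo l hlM]
      exact hf2 i j k l (small i hi hiM) (small j hj hjM) (small k hk hkM)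
        (small l hl hlM) hij hkl hne
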